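/- Let a ∈ R_n and let ℓ ≥ 1. Then wt(a^{2^ℓ − 1}) ≤ wt(a)^ℓ, where the power a^{2^ℓ − 1} is computed in R_n. -/

import Mathlib

open Polynomial

noncomputable section

/-- `R_n = F_2[x]/(x^n - 1)`. -/
abbrev Rq (n : ℕ) : Type :=
  Polynomial (ZMod 2) ⧸ Ideal.span ({X ^ n - 1} : Set (Polynomial (ZMod 2)))

/-- The canonical projection `F_2[x] → R_n`. -/
abbrev mkq (n : ℕ) : Polynomial (ZMod 2) →+* Rq n :=
  Ideal.Quotient.mk (Ideal.span ({X ^ n - 1} : Set (Polynomial (ZMod 2))))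

/-- The unique polynomial representative of degree `< n` of an element of `R_n`
(obtained by reducing any lift modulo the monic polynomial `x^n - 1`). -/
def rep (n : ℕ) (z : Rq n) : Polynomial (ZMod 2) :=
  Function.surjInv Ideal.Quotient.mk_surjective z %ₘ (X ^ n - 1)

/-- Hamming weight of an element of `R_n`: the number of nonzero coefficients of its
unique representative of degree `< n`. -/
def wtq (n : ℕ) (z : Rq n) : ℕ := (rep n z).support.card

lemma monic_xn (n : ℕ) (hn : 1 ≤ n) : (X ^ n - 1 : Polynomial (ZMod 2)).Monic := by
  simpa using monic_X_pow_sub_C (1 : ZMod 2) (by omega)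

lemma degree_xn (n : ℕ) (hn : 1 ≤ n) : (X ^ n - 1 : Polynomial (ZMod 2)).degree = n := by
  simpa using degree_X_pow_sub_C (by omega : 0 < n) (1 : ZMod 2)

lemma rep_eq_mod (n : ℕ) (hn : 1 ≤ n) (p : Polynomial (ZMod 2)) :
    rep n (mkq n p) = p %ₘ (X ^ n - 1) := by
  apply modByMonic_eq_of_dvd_sub (monic_xn n hn)
  rw [← Ideal.mem_span_singleton, ← Ideal.Quotient.eq]
  exact Function.surjInv_eq (f := mkq n) Ideal.Quotient.mk_surjective (mkq n p)

lemma mk_rep (n : ℕ) (hn : 1 ≤ n) (z : Rq n) : mkq n (rep n z) = z := by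
  obtain ⟨p, rfl⟩ := Ideal.Quotient.mk_surjective (I := Ideal.span
    ({X ^ n - 1} : Set (Polynomial (ZMod 2)))) z
  rw [rep_eq_mod n hn, modByMonic_eq_sub_mul_div _ (X ^ n - 1), map_sub, map_mul]
  have h0 : mkq n (X ^ n - 1) = 0 := by
    rw [Ideal.Quotient.eq_zero_iff_mem]
    exact Ideal.subset_span rfl
  rw [h0, zero_mul, sub_zero]

lemma degree_rep_lt (n : ℕ) (hn : 1 ≤ n) (z : Rq n) : (rep n z).degree < n := by
  have := degree_modByMonic_lt (Function.surjInv (f := mkq n)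
    Ideal.Quotient.mk_surjective z) (monic_xn n hn)
  rwa [degree_xn n hn] at this

lemma rep_unique (n : ℕ) (hn : 1 ≤ n) (q : Polynomial (ZMod 2)) (hq : q.degree < n)
    (z : Rq n) (hz : mkq n q = z) : rep n z = q := by
  have hd : (X ^ n - 1 : Polynomial (ZMod 2)) ∣ (rep n z - q) := by
    rw [← Ideal.mem_span_singleton, ← Ideal.Quotient.eq]
    rw [show Ideal.Quotient.mk _ (rep n z) = mkq n (rep n z) from rfl, mk_rep n hn, ← hz]
  have : rep n z - q = 0 := by
    apply eq_zero_of_dvd_of_degree_lt hd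
    rw [degree_xn n hn]
    exact lt_of_le_of_lt (degree_sub_le _ _) (max_lt (degree_rep_lt n hn z) hq)
  exact sub_eq_zero.mp this

/-- reduction of a polynomial modulo `x^n - 1` by reducing exponents mod `n` -/
def red (n : ℕ) (p : Polynomial (ZMod 2)) : Polynomial (ZMod 2) :=
  ∑ i ∈ p.support, C (p.coeff i) * X ^ (i % n)

lemma mk_X_pow_mod (n : ℕ) (i : ℕ) : mkq n (X ^ (i % n)) = mkq n (X ^ i) := by
  have h0 : mkq n (X ^ n) = 1 := by
    have : mkq n (X ^ n - 1) = 0 := by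
      rw [Ideal.Quotient.eq_zero_iff_mem]; exact Ideal.subset_span rfl
    rw [map_sub, map_one, sub_eq_zero] at this
    exact this
  conv_rhs => rw [← Nat.div_add_mod i n, pow_add, pow_mul, map_mul, map_pow, h0, one_pow,
    one_mul]

lemma mk_red (n : ℕ) (p : Polynomial (ZMod 2)) : mkq n (red n p) = mkq n p := by
  conv_rhs => rw [p.as_sum_support]
  rw [red, map_sum, map_sum]
  refine Finset.sum_congr rfl fun i _ => ?_
  rw [← C_mul_X_pow_eq_monomial, map_mul, map_mul, mk_X_pow_mod]

lemma degree_red_lt (n : ℕ) (hn : 1 ≤ n) (p : Polynomial (ZMod 2)) :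
    (red n p).degree < n := by
  refine lt_of_le_of_lt (degree_sum_le _ _) ?_
  rw [Finset.sup_lt_iff (by exact_mod_cast WithBot.bot_lt_coe n)]
  intro i _
  refine lt_of_le_of_lt (degree_C_mul_X_pow_le _ _) ?_
  exact_mod_cast Nat.mod_lt i (by omega)

lemma support_red_subset (n : ℕ) (p : Polynomial (ZMod 2)) :
    (red n p).support ⊆ p.support.image (· % n) := by
  intro j hj
  rw [mem_support_iff] at hj
  rw [red, finset_sum_coeff] at hj
  obtain ⟨i, hi, hne⟩ := Finset.exists_ne_zero_of_sum_ne_zero hj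
  rw [coeff_C_mul, coeff_X_pow] at hne
  simp only [Finset.mem_image]
  refine ⟨i, hi, ?_⟩
  by_contra h
  rw [if_neg (fun hc => h hc.symm), mul_zero] at hne
  exact hne rfl

lemma wt_mk_le (n : ℕ) (hn : 1 ≤ n) (p : Polynomial (ZMod 2)) :
    wtq n (mkq n p) ≤ p.support.card := by
  rw [wtq, rep_unique n hn (red n p) (degree_red_lt n hn p) _ (mk_red n p)]
  exact le_trans (Finset.card_le_card (support_red_subset n p)) (Finset.card_image_le)

lemma wt_mul_le (n : ℕ) (hn : 1 ≤ n) (z w : Rq n) :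
    wtq n (z * w) ≤ wtq n z * wtq n w := by
  have hzw : z * w = mkq n (rep n z * rep n w) := by
    rw [map_mul, mk_rep n hn, mk_rep n hn]
  rw [hzw]
  refine le_trans (wt_mk_le n hn _) ?_
  exact card_support_mul_le

lemma map_frob_eq (p : Polynomial (ZMod 2)) : p.map (frobenius (ZMod 2) 2) = p := by
  ext i
  rw [coeff_map, frobenius_def, ZMod.pow_card]

lemma sq_eq_expand (p : Polynomial (ZMod 2)) : p ^ 2 = expand (ZMod 2) 2 p := by
  rw [← map_frobenius_expand, map_frob_eq]

lemma support_expand_subset (p : Polynomial (ZMod 2)) :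
    (expand (ZMod 2) 2 p).support ⊆ p.support.image (2 * ·) := by
  intro j hj
  rw [mem_support_iff, coeff_expand (by norm_num)] at hj
  simp only [Finset.mem_image]
  split_ifs at hj with h
  · exact ⟨j / 2, mem_support_iff.mpr hj, Nat.mul_div_cancel' h⟩
  · exact absurd rfl hj

lemma wt_sq_le (n : ℕ) (hn : 1 ≤ n) (z : Rq n) : wtq n (z ^ 2) ≤ wtq n z := by
  have h : z ^ 2 = mkq n ((rep n z) ^ 2) := by rw [map_pow, mk_rep n hn]
  rw [h]
  refine le_trans (wt_mk_le n hn _) ?_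
  rw [sq_eq_expand]
  refine le_trans (Finset.card_le_card (support_expand_subset _)) ?_
  exact Finset.card_image_le

/-- for `a ∈ R_n` and `ℓ ≥ 1`, `wt(a^{2^ℓ - 1}) ≤ wt(a)^ℓ`. -/
theorem stmt17 (n : ℕ) (hn : 1 ≤ n) (ℓ : ℕ) (hℓ : 1 ≤ ℓ) (a : Rq n) :
    wtq n (a ^ (2 ^ ℓ - 1)) ≤ wtq n a ^ ℓ := by
  induction ℓ, hℓ using Nat.le_induction with
  | base => simp
  | succ ℓ hℓ ih =>
    have h1 : (1 : ℕ) ≤ 2 ^ ℓ := Nat.one_le_two_pow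
    have hk : 2 ^ (ℓ + 1) - 1 = 2 * (2 ^ ℓ - 1) + 1 := by
      rw [pow_succ]; omega
    have ha : a ^ (2 ^ (ℓ + 1) - 1) = (a ^ (2 ^ ℓ - 1)) ^ 2 * a := by
      rw [hk, pow_succ, mul_comm 2, pow_mul]
    rw [ha]
    calc wtq n ((a ^ (2 ^ ℓ - 1)) ^ 2 * a)
        ≤ wtq n ((a ^ (2 ^ ℓ - 1)) ^ 2) * wtq n a := wt_mul_le n hn _ _
      _ ≤ wtq n (a ^ (2 ^ ℓ - 1)) * wtq n a :=
          Nat.mul_le_mul_right _ (wt_sq_le n hn _)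
      _ ≤ wtq n a ^ ℓ * wtq n a := Nat.mul_le_mul_right _ ih
      _ = wtq n a ^ (ℓ + 1) := (pow_succ _ _).symm

end
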